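/- Let d ≤ 3, let ρ be a density matrix on ℂ^d, and let w be a d×d unitary matrix such that ρ·(w·ρ·wᴴ) = 0. Then ρ has rank 1, i.e. ρ is a pure state; equivalently Matrix.trace (ρ·ρ) = 1 and ρ·ρ = ρ. -/

import Mathlib

open Matrix ComplexOrder

/-- For `d ≤ 3`, if `ρ` is a density matrix on `ℂ^d`, `w` is unitary and the strict
orthogonality condition `ρ * (w * ρ * wᴴ) = 0` holds, then `ρ` is a pure state:
it has rank 1, unit purity, and is idempotent. -/
theorem stmt_8 {d : ℕ} (hd : d ≤ 3) (ρ w : Matrix (Fin d) (Fin d) ℂ)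
    (hρ : ρ.PosSemidef) (htr : ρ.trace = 1) (hw : wᴴ * w = 1)
    (horth : ρ * (w * ρ * wᴴ) = 0) :
    ρ.rank = 1 ∧ (ρ * ρ).trace = 1 ∧ ρ * ρ = ρ := by
  classical
  have hH : ρ.IsHermitian := hρ.1
  -- unit determinants
  have hdetw : wᴴ.det * w.det = 1 := by
    have := congrArg det hw; rwa [det_mul, det_one] at this
  have hUw : IsUnit w.det := IsUnit.of_mul_eq_one _ (by rw [mul_comm]; exact hdetw)
  have hUwH : IsUnit wᴴ.det := IsUnit.of_mul_eq_one _ hdetw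
  have hrσ : (w * ρ * wᴴ).rank = ρ.rank := by
    rw [rank_mul_eq_left_of_isUnit_det _ _ hUwH, rank_mul_eq_right_of_isUnit_det _ _ hUw]
  have hsum2 : ρ.rank + ρ.rank ≤ d := by
    have := Matrix.rank_add_rank_le_card_of_mul_eq_zero horth
    rwa [Fintype.card_fin, hrσ] at this
  -- spectral data
  have hspec := hH.spectral_theorem
  rw [Unitary.conjStarAlgAut_apply] at hspec
  set U : Matrix (Fin d) (Fin d) ℂ := (hH.eigenvectorUnitary : Matrix (Fin d) (Fin d) ℂ) with hU
  set D : Matrix (Fin d) (Fin d) ℂ := diagonal (RCLike.ofReal ∘ hH.eigenvalues) with hD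
  have hUU : star U * U = 1 := Matrix.mem_unitaryGroup_iff'.mp hH.eigenvectorUnitary.2
  have htrsum : ∑ i, (hH.eigenvalues i : ℂ) = 1 := by
    have h1 : ρ.trace = D.trace := by
      conv_lhs => rw [hspec]
      rw [trace_mul_cycle, hUU, Matrix.one_mul]
    rw [htr, hD, trace_diagonal] at h1
    simpa using h1.symm
  have hsumR : ∑ i, hH.eigenvalues i = 1 := by
    have : ((∑ i, hH.eigenvalues i : ℝ) : ℂ) = 1 := by push_cast; exact htrsum
    exact_mod_cast this
  have hcard := hH.rank_eq_card_non_zero_eigs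
  -- rank is positive
  have hrpos : ρ.rank ≠ 0 := by
    intro h0
    rw [hcard] at h0
    have hall : ∀ i, hH.eigenvalues i = 0 := by
      intro i
      by_contra hi
      exact (Fintype.card_eq_zero_iff.mp h0).elim ⟨i, hi⟩
    rw [Finset.sum_congr rfl (fun i _ => hall i), Finset.sum_const, smul_zero] at hsumR
    exact one_ne_zero hsumR.symm
  have hrank : ρ.rank = 1 := by omega
  -- eigenvalues are 0 or 1
  have hone : Fintype.card {i // hH.eigenvalues i ≠ 0} = 1 := by rw [← hcard]; exact hrank
  obtain ⟨x, hx⟩ := Fintype.card_eq_one_iff.mp hone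
  have hzero : ∀ i, i ≠ (x : Fin d) → hH.eigenvalues i = 0 := by
    intro i hi
    by_contra h
    exact hi (congrArg Subtype.val (hx ⟨i, h⟩))
  have hx1 : hH.eigenvalues (x : Fin d) = 1 := by
    rw [← hsumR]
    rw [Finset.sum_eq_single (x : Fin d) (fun j _ hj => hzero j hj) (by simp)]
  have hidem : ∀ i, hH.eigenvalues i * hH.eigenvalues i = hH.eigenvalues i := by
    intro i
    rcases eq_or_ne i (x : Fin d) with h | h
    · rw [h, hx1, one_mul]
    · rw [hzero i h, mul_zero]
  have hDD : D * D = D := by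
    have hfun : (fun i => (RCLike.ofReal ∘ hH.eigenvalues) i * (RCLike.ofReal ∘ hH.eigenvalues) i)
        = (RCLike.ofReal ∘ hH.eigenvalues : Fin d → ℂ) := by
      funext i
      rw [Function.comp_apply, ← RCLike.ofReal_mul, hidem i]
    rw [hD, diagonal_mul_diagonal, hfun]
  have key : ρ * ρ = ρ := by
    calc ρ * ρ = (U * D * star U) * (U * D * star U) := by rw [← hspec]
      _ = U * (D * (star U * (U * (D * star U)))) := by simp only [Matrix.mul_assoc]
      _ = U * (D * ((star U * U) * (D * star U))) := by
            rw [Matrix.mul_assoc (star U) U (D * star U)]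
      _ = U * (D * (D * star U)) := by rw [hUU, Matrix.one_mul]
      _ = U * ((D * D) * star U) := by rw [Matrix.mul_assoc]
      _ = U * (D * star U) := by rw [hDD]
      _ = ρ := by rw [← Matrix.mul_assoc, ← hspec]
  exact ⟨hrank, by rw [key, htr], key⟩
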